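/- Let α, β be real numbers with α > β > −1/2 and ρ = α + β + 1. There exists a constant C > 0 such that for every λ ∈ ℂ with Im λ ≥ 0, one has |c(−λ)^{−1}| ≤ C (1 + |λ|)^{α + 1/2}, where c(−λ)^{−1} = 2^{−ρ−iλ} Γ((ρ−iλ)/2) Γ((ρ−iλ)/2 − β) / (Γ(−iλ) Γ(α+1)). -/

import Mathlib

open Complex

/-- The reciprocal of the Jacobi `c`-function at `-λ`:
`c(−λ)⁻¹ = 2^{−ρ−iλ} Γ((ρ−iλ)/2) Γ((ρ−iλ)/2 − β) / (Γ(−iλ) Γ(α+1))` with `ρ = α+β+1`. -/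
noncomputable def jacobiCInv (α β : ℝ) (z : ℂ) : ℂ :=
  (2 : ℂ) ^ (-((α : ℂ) + β + 1) - Complex.I * z) *
    Complex.Gamma (((α : ℂ) + β + 1 - Complex.I * z) / 2) *
    Complex.Gamma (((α : ℂ) + β + 1 - Complex.I * z) / 2 - β) /
    (Complex.Gamma (-(Complex.I * z)) * Complex.Gamma ((α : ℂ) + 1))

open Finset Filter

private lemma exp_sub_sq_le (w : ℝ) (hw : 0 ≤ w) : Real.exp (w - w^2) ≤ 1 + w := by
  have h1 : (0:ℝ) < 1 + w := by linarith
  have h2 : Real.log (1/(1+w)) ≤ 1/(1+w) - 1 := Real.log_le_sub_one_of_pos (by positivity)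
  rw [Real.log_div one_ne_zero (ne_of_gt h1), Real.log_one] at h2
  have h5 : w - w^2 ≤ 1 - 1/(1+w) := by
    rw [show (1:ℝ) - 1/(1+w) = w/(1+w) by field_simp; ring, le_div_iff₀ h1]
    nlinarith
  calc Real.exp (w - w^2) ≤ Real.exp (Real.log (1+w)) := by
        apply Real.exp_le_exp.mpr; linarith
    _ = 1 + w := Real.exp_log h1

private lemma prod_lb (a r : ℝ) (ha : 0 < a) (ha1 : a ≤ 1) (hr : 0 < r) (n : ℕ) :
    Real.exp (-10) * (((n:ℝ) + 1 + r) / (1 + r)) ^ (2*a) ≤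
      ∏ i ∈ Finset.range n, (1 + 2*a*((i:ℝ)+1)/(((i:ℝ)+1+r)^2)) := by
  set w : ℕ → ℝ := fun i => 2*a*((i:ℝ)+1)/(((i:ℝ)+1+r)^2) with hw
  have hw0 : ∀ i, 0 ≤ w i := fun i => by positivity
  -- Step 1: exp of sum bound
  have step1 : Real.exp (∑ i ∈ range n, (w i - (w i)^2)) ≤ ∏ i ∈ range n, (1 + w i) := by
    rw [Real.exp_sum]
    exact Finset.prod_le_prod (fun i _ => (Real.exp_pos _).le)
      (fun i _ => exp_sub_sq_le _ (hw0 i))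
  -- Step 2: lower bound for sum of w
  have step2 : 2*a*((Real.log ((n:ℝ)+1+r) - Real.log (1+r)) - 1) ≤ ∑ i ∈ range n, w i := by
    have t1 : ∀ i ∈ range n,
        2*a*((Real.log ((i:ℝ)+1+1+r) - Real.log ((i:ℝ)+1+r)) - (r/((i:ℝ)+r) - r/((i:ℝ)+1+r)))
          ≤ w i := by
      intro i _
      set p : ℝ := (i:ℝ)+1 with hp
      have hp1 : (1:ℝ) ≤ p := by rw [hp]; have : (0:ℝ) ≤ (i:ℝ) := Nat.cast_nonneg i; linarith
      have hppos : (0:ℝ) < p := by linarith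
      have hD : (0:ℝ) < p + r := by linarith
      have hir : (0:ℝ) < (i:ℝ) + r := by positivity
      -- log bound
      have l1 : Real.log ((i:ℝ)+1+1+r) - Real.log ((i:ℝ)+1+r) ≤ 1/(p+r) := by
        have := Real.log_le_sub_one_of_pos (show (0:ℝ) < (p+1+r)/(p+r) by positivity)
        rw [Real.log_div (by positivity) (by positivity)] at this
        have he : (p+1+r)/(p+r) - 1 = 1/(p+r) := by field_simp; ring
        have : Real.log (p+1+r) - Real.log (p+r) ≤ 1/(p+r) := by linarith [he ▸ this]
        convert this using 3 <;> ring
      -- harmonic tail bound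
      have l2 : r/((i:ℝ)+r) - r/((i:ℝ)+1+r) ≥ r/(p+r)^2 := by
        have he : r/((i:ℝ)+r) - r/((i:ℝ)+1+r) = r/(((i:ℝ)+r)*((i:ℝ)+1+r)) := by
          field_simp; ring
        rw [he]
        apply div_le_div_of_nonneg_left hr.le (by positivity)
        nlinarith
      have hwi : w i = 2*a*(1/(p+r) - r/(p+r)^2) := by
        have : 1/(p+r) - r/(p+r)^2 = p/(p+r)^2 := by field_simp; ring
        rw [this, hw, hp]; ring
      rw [hwi]
      have : (Real.log ((i:ℝ)+1+1+r) - Real.log ((i:ℝ)+1+r)) - (r/((i:ℝ)+r) - r/((i:ℝ)+1+r))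
          ≤ 1/(p+r) - r/(p+r)^2 := by linarith
      nlinarith [this, ha.le]
    have := Finset.sum_le_sum t1
    -- telescoping
    have tel1 : ∑ i ∈ range n, (Real.log ((i:ℝ)+1+1+r) - Real.log ((i:ℝ)+1+r))
        = Real.log ((n:ℝ)+1+r) - Real.log (1+r) := by
      have := Finset.sum_range_sub (fun i => Real.log ((i:ℝ)+1+r)) n
      simp only [Nat.cast_add, Nat.cast_one] at this ⊢
      convert this using 2 with i
      push_cast; ring_nf
    have tel2 : ∑ i ∈ range n, (r/((i:ℝ)+r) - r/((i:ℝ)+1+r)) = r/r - r/((n:ℝ)+r) := by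
      have := Finset.sum_range_sub' (fun i => r/((i:ℝ)+r)) n
      simp only [Nat.cast_zero, zero_add] at this
      convert this using 2 with i
      push_cast; ring_nf
    have tel2' : ∑ i ∈ range n, (r/((i:ℝ)+r) - r/((i:ℝ)+1+r)) ≤ 1 := by
      rw [tel2, div_self (ne_of_gt hr)]
      have : 0 ≤ r/((n:ℝ)+r) := by positivity
      linarith
    have expand : ∑ i ∈ range n,
        2*a*((Real.log ((i:ℝ)+1+1+r) - Real.log ((i:ℝ)+1+r)) - (r/((i:ℝ)+r) - r/((i:ℝ)+1+r)))
        = 2*a*((∑ i ∈ range n, (Real.log ((i:ℝ)+1+1+r) - Real.log ((i:ℝ)+1+r)))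
             - ∑ i ∈ range n, (r/((i:ℝ)+r) - r/((i:ℝ)+1+r))) := by
      rw [← Finset.mul_sum, Finset.sum_sub_distrib]
    have h2a : (0:ℝ) ≤ 2*a := by linarith
    calc 2*a*((Real.log ((n:ℝ)+1+r) - Real.log (1+r)) - 1)
        ≤ 2*a*((Real.log ((n:ℝ)+1+r) - Real.log (1+r)) - ∑ i ∈ range n, (r/((i:ℝ)+r) - r/((i:ℝ)+1+r))) := by
          apply mul_le_mul_of_nonneg_left _ h2a; linarith
      _ = ∑ i ∈ range n,
        2*a*((Real.log ((i:ℝ)+1+1+r) - Real.log ((i:ℝ)+1+r)) - (r/((i:ℝ)+r) - r/((i:ℝ)+1+r))) := by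
          rw [expand, tel1]
      _ ≤ ∑ i ∈ range n, w i := this
  -- Step 3: sum of squares bound
  have step3 : ∑ i ∈ range n, (w i)^2 ≤ 8 := by
    have t1 : ∀ i ∈ range n, (w i)^2 ≤ 8*(1/((i:ℝ)+1) - 1/((i:ℝ)+1+1)) := by
      intro i _
      set p : ℝ := (i:ℝ)+1 with hp
      have hp1 : (1:ℝ) ≤ p := by rw [hp]; have : (0:ℝ) ≤ (i:ℝ) := Nat.cast_nonneg i; linarith
      have hppos : (0:ℝ) < p := by linarith
      have hD : (0:ℝ) < p + r := by linarith
      have hwle : w i ≤ 2/p := by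
        simp only [hw]
        rw [← hp, div_le_div_iff₀ (by positivity) hppos]
        nlinarith [mul_nonneg (mul_nonneg (sub_nonneg.mpr ha1) hppos.le) hppos.le,
          mul_pos hppos hr, sq_nonneg r]
      have h1 : (w i)^2 ≤ (2/p)^2 := pow_le_pow_left₀ (hw0 i) hwle 2
      have h2 : (2/p)^2 ≤ 8*(1/p - 1/(p+1)) := by
        rw [show 1/p - 1/(p+1) = 1/(p*(p+1)) by field_simp; ring]
        rw [mul_one_div, div_pow, div_le_div_iff₀ (by positivity) (by positivity)]
        nlinarith
      calc (w i)^2 ≤ (2/p)^2 := h1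
        _ ≤ 8*(1/p - 1/(p+1)) := h2
        _ = 8*(1/((i:ℝ)+1) - 1/((i:ℝ)+1+1)) := by rw [hp]
    have tel : ∑ i ∈ range n, (8*(1/((i:ℝ)+1) - 1/((i:ℝ)+1+1))) = 8*(1/((0:ℝ)+1) - 1/((n:ℝ)+1)) := by
      rw [← Finset.mul_sum]
      congr 1
      have := Finset.sum_range_sub' (fun i => 1/((i:ℝ)+1)) n
      simp only [Nat.cast_zero] at this
      convert this using 2 with i
      push_cast; ring_nf
    have : ∑ i ∈ range n, (w i)^2 ≤ 8*(1/((0:ℝ)+1) - 1/((n:ℝ)+1)) := by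
      rw [← tel]; exact Finset.sum_le_sum t1
    have hn1 : (0:ℝ) ≤ ((n:ℝ)+1)⁻¹ := by positivity
    norm_num at this
    linarith
  -- combine
  have hL : (((n:ℝ)+1+r)/(1+r)) ^ (2*a) = Real.exp (2*a*(Real.log ((n:ℝ)+1+r) - Real.log (1+r))) := by
    rw [Real.rpow_def_of_pos (by positivity), Real.log_div (by positivity) (by positivity)]
    ring_nf
  calc Real.exp (-10) * (((n:ℝ)+1+r)/(1+r)) ^ (2*a)
      = Real.exp (2*a*(Real.log ((n:ℝ)+1+r) - Real.log (1+r)) - 10) := by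
        rw [hL, ← Real.exp_add]; ring_nf
    _ ≤ Real.exp (∑ i ∈ range n, (w i - (w i)^2)) := by
        apply Real.exp_le_exp.mpr
        rw [Finset.sum_sub_distrib]
        have := step2
        nlinarith [step3]
    _ ≤ ∏ i ∈ range n, (1 + w i) := step1

set_option maxHeartbeats 1000000 in
private lemma key_norm_aux (a r : ℝ) (ha : 0 < a) (ha1 : a ≤ 1) (s : ℂ)
    (hre : 0 ≤ s.re) (n : ℕ) (hr : 0 < r) (hx : s.re ≤ r)
    (hsq : s.re^2 + s.im^2 = r^2) :
    (n:ℝ)^a * ∏ j ∈ Finset.range (n+1), ‖s + j‖ ≤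
      Real.exp 5 * (1 + r)^a * ∏ j ∈ Finset.range (n+1), ‖s + a + j‖ := by
  have hNS : ∀ c : ℝ, Complex.normSq (s + (c:ℂ)) = (s.re + c)^2 + s.im^2 := by
    intro c; simp [Complex.normSq_apply]; ring
  rcases Nat.eq_zero_or_pos n with rfl | hn
  · have h1 : ((0:ℕ):ℝ)^a = 0 := by rw [Nat.cast_zero]; exact Real.zero_rpow (ne_of_gt ha)
    rw [h1, zero_mul]
    positivity
  have hn0 : (0:ℝ) < n := by exact_mod_cast hn
  -- term-wise bound
  have hterm : ∀ i : ℕ, (1 + 2*a*((i:ℝ)+1)/(((i:ℝ)+1+r)^2)) * Complex.normSq (s + ((i:ℝ)+1 : ℝ)) ≤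
      Complex.normSq (s + ((a + ((i:ℝ)+1)) : ℝ)) := by
    intro i
    set p : ℝ := (i:ℝ)+1 with hp
    have hppos : (0:ℝ) < p := by rw [hp]; positivity
    rw [hNS, hNS]
    set w : ℝ := 2*a*p/((p+r)^2) with hwdef
    have hw0 : 0 ≤ w := by positivity
    have hQ : (s.re + p)^2 + s.im^2 ≤ (p + r)^2 := by nlinarith
    have hwQ : w * ((s.re+p)^2 + s.im^2) ≤ w * (p+r)^2 :=
      mul_le_mul_of_nonneg_left hQ hw0
    have hwv : w * (p+r)^2 = 2*a*p := by
      rw [hwdef]; field_simp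
    nlinarith [hwQ, hwv, mul_nonneg ha.le hre, sq_nonneg a]
  -- product over shifted indices
  have hP0 : (0:ℝ) ≤ ∏ i ∈ range n, Complex.normSq (s + ((i:ℝ)+1 : ℝ)) :=
    Finset.prod_nonneg fun i _ => Complex.normSq_nonneg _
  have hprod1 : (∏ i ∈ range n, (1 + 2*a*((i:ℝ)+1)/(((i:ℝ)+1+r)^2))) *
      ∏ i ∈ range n, Complex.normSq (s + ((i:ℝ)+1 : ℝ)) ≤
      ∏ i ∈ range n, Complex.normSq (s + ((a + ((i:ℝ)+1)) : ℝ)) := by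
    rw [← Finset.prod_mul_distrib]
    apply Finset.prod_le_prod
    · intro i _
      have h1 : (0:ℝ) ≤ 1 + 2*a*((i:ℝ)+1)/(((i:ℝ)+1+r)^2) := by positivity
      exact mul_nonneg h1 (Complex.normSq_nonneg _)
    · intro i _; exact hterm i
  have step : Real.exp (-10) * (((n:ℝ)+1+r)/(1+r))^(2*a) *
      (∏ i ∈ range n, Complex.normSq (s + ((i:ℝ)+1 : ℝ))) ≤
      ∏ i ∈ range n, Complex.normSq (s + ((a + ((i:ℝ)+1)) : ℝ)) :=
    le_trans (mul_le_mul_of_nonneg_right (prod_lb a r ha ha1 hr n) hP0) hprod1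
  have hexp : Real.exp 10 * Real.exp (-10) = 1 := by
    rw [← Real.exp_add]; norm_num
  have step' : (((n:ℝ)+1+r)/(1+r))^(2*a) *
      (∏ i ∈ range n, Complex.normSq (s + ((i:ℝ)+1 : ℝ))) ≤
      Real.exp 10 * ∏ i ∈ range n, Complex.normSq (s + ((a + ((i:ℝ)+1)) : ℝ)) := by
    have h := mul_le_mul_of_nonneg_left step (Real.exp_pos 10).le
    calc (((n:ℝ)+1+r)/(1+r))^(2*a) * (∏ i ∈ range n, Complex.normSq (s + ((i:ℝ)+1 : ℝ)))
        = Real.exp 10 * (Real.exp (-10) * (((n:ℝ)+1+r)/(1+r))^(2*a) *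
            (∏ i ∈ range n, Complex.normSq (s + ((i:ℝ)+1 : ℝ)))) := by
          linear_combination (-((((n:ℝ)+1+r)/(1+r))^(2*a) *
            (∏ i ∈ range n, Complex.normSq (s + ((i:ℝ)+1 : ℝ))))) * hexp
      _ ≤ _ := h
  -- rewrite products over range (n+1)
  have split0 : ∏ j ∈ range (n+1), Complex.normSq (s + j) =
      (∏ i ∈ range n, Complex.normSq (s + ((i:ℝ)+1 : ℝ))) * Complex.normSq s := by
    rw [Finset.prod_range_succ' (fun j => Complex.normSq (s + (j:ℂ))) n]
    simp only [Nat.cast_zero, add_zero]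
    congr 1
    apply Finset.prod_congr rfl; intro i _
    congr 2
    push_cast; ring
  have splita : ∏ j ∈ range (n+1), Complex.normSq (s + a + j) =
      (∏ i ∈ range n, Complex.normSq (s + ((a + ((i:ℝ)+1)) : ℝ))) * Complex.normSq (s + a) := by
    rw [Finset.prod_range_succ' (fun j => Complex.normSq (s + (a:ℂ) + (j:ℂ))) n]
    simp only [Nat.cast_zero, add_zero]
    congr 1
    apply Finset.prod_congr rfl; intro i _
    congr 1
    push_cast; ring
  have h00 : Complex.normSq s ≤ Complex.normSq (s + a) := by
    have h1 : Complex.normSq (s + (a:ℂ)) = (s.re + a)^2 + s.im^2 := hNS a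
    have h2 : Complex.normSq s = s.re^2 + s.im^2 := by simp [Complex.normSq_apply]; ring
    nlinarith [mul_nonneg ha.le hre, sq_nonneg a]
  have hrpow1 : (n:ℝ)^(2*a) ≤ ((n:ℝ)+1+r)^(2*a) :=
    Real.rpow_le_rpow (le_of_lt hn0) (by linarith) (by positivity)
  have hrpow2 : ((n:ℝ)+1+r)^(2*a) = (1+r)^(2*a) * (((n:ℝ)+1+r)/(1+r))^(2*a) := by
    rw [Real.div_rpow (by positivity) (by positivity)]
    field_simp
  have hsqkey : (n:ℝ)^(2*a) * ∏ j ∈ range (n+1), Complex.normSq (s + j) ≤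
      Real.exp 10 * (1+r)^(2*a) * ∏ j ∈ range (n+1), Complex.normSq (s + a + j) := by
    rw [split0, splita]
    calc (n:ℝ)^(2*a) * ((∏ i ∈ range n, Complex.normSq (s + ((i:ℝ)+1 : ℝ))) * Complex.normSq s)
        ≤ ((n:ℝ)+1+r)^(2*a) * ((∏ i ∈ range n, Complex.normSq (s + ((i:ℝ)+1 : ℝ))) * Complex.normSq (s+a)) := by
          apply mul_le_mul hrpow1 (mul_le_mul_of_nonneg_left h00 hP0) _ (by positivity)
          exact mul_nonneg hP0 (Complex.normSq_nonneg _)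
      _ = (1+r)^(2*a) * (((((n:ℝ)+1+r)/(1+r))^(2*a)) *
            (∏ i ∈ range n, Complex.normSq (s + ((i:ℝ)+1 : ℝ)))) * Complex.normSq (s+a) := by
          rw [hrpow2]; ring
      _ ≤ (1+r)^(2*a) * (Real.exp 10 *
            ∏ i ∈ range n, Complex.normSq (s + ((a + ((i:ℝ)+1)) : ℝ))) * Complex.normSq (s+a) := by
          apply mul_le_mul_of_nonneg_right (mul_le_mul_of_nonneg_left step' (by positivity))
            (Complex.normSq_nonneg _)
      _ = Real.exp 10 * (1+r)^(2*a) *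
            ((∏ i ∈ range n, Complex.normSq (s + ((a + ((i:ℝ)+1)) : ℝ))) * Complex.normSq (s+a)) := by
          ring
  -- unsquare
  apply le_of_pow_le_pow_left₀ (two_ne_zero) (by positivity)
  have hL2 : ((n:ℝ)^a * ∏ j ∈ range (n+1), ‖s + j‖)^2
      = (n:ℝ)^(2*a) * ∏ j ∈ range (n+1), Complex.normSq (s + j) := by
    rw [mul_pow, ← Finset.prod_pow]
    congr 1
    · rw [← Real.rpow_natCast ((n:ℝ)^a) 2, ← Real.rpow_mul hn0.le]
      norm_num
      ring_nf
    · exact Finset.prod_congr rfl fun j _ => Complex.sq_norm _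
  have hR2 : (Real.exp 5 * (1+r)^a * ∏ j ∈ range (n+1), ‖s + a + j‖)^2
      = Real.exp 10 * (1+r)^(2*a) * ∏ j ∈ range (n+1), Complex.normSq (s + a + j) := by
    rw [mul_pow, mul_pow, ← Finset.prod_pow]
    congr 1
    congr 1
    · rw [sq, ← Real.exp_add]; norm_num
    · rw [← Real.rpow_natCast ((1+r)^a) 2, ← Real.rpow_mul (by positivity)]
      norm_num
      ring_nf
    · exact Finset.prod_congr rfl fun j _ => Complex.sq_norm _
  rw [hL2, hR2]
  exact hsqkey

private lemma key_norm (a : ℝ) (ha : 0 < a) (ha1 : a ≤ 1) (s : ℂ) (hs : s ≠ 0)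
    (hre : 0 ≤ s.re) (n : ℕ) :
    (n:ℝ)^a * ∏ j ∈ Finset.range (n+1), ‖s + j‖ ≤
      Real.exp 5 * (1 + ‖s‖)^a * ∏ j ∈ Finset.range (n+1), ‖s + a + j‖ := by
  apply key_norm_aux a (‖s‖) ha ha1 s hre n
    (norm_pos_iff.mpr hs) (Complex.re_le_norm s)
  rw [Complex.sq_norm]; simp [Complex.normSq_apply]; ring

private lemma gamma_ratio_small (a : ℝ) (ha : 0 < a) (ha1 : a ≤ 1) (s : ℂ) (hs : s ≠ 0)
    (hre : 0 ≤ s.re) :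
    ‖Complex.Gamma (s + a)‖ ≤
      Real.exp 5 * (1 + ‖s‖)^a * ‖Complex.Gamma s‖ := by
  have hne0 : ∀ j : ℕ, s + (j:ℂ) ≠ 0 := by
    intro j h
    have hj : s = -(j:ℂ) := by linear_combination h
    rcases Nat.eq_zero_or_pos j with h0 | hpos
    · exact hs (by simp [hj, h0])
    · have h1 : s.re = -(j:ℝ) := by rw [hj]; simp
      have h2 : (0:ℝ) < j := by exact_mod_cast hpos
      linarith
  have hnea : ∀ j : ℕ, s + (a:ℂ) + (j:ℂ) ≠ 0 := by
    intro j h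
    have h1 : (s + (a:ℂ) + (j:ℂ)).re = 0 := by rw [h]; simp
    simp only [Complex.add_re, Complex.ofReal_re, Complex.natCast_re] at h1
    have h2 : (0:ℝ) ≤ (j:ℝ) := Nat.cast_nonneg j
    linarith
  have hP0 : ∀ n : ℕ, 0 < ∏ j ∈ range (n+1), ‖s + j‖ := fun n =>
    Finset.prod_pos fun j _ => norm_pos_iff.mpr (hne0 j)
  have hPa : ∀ n : ℕ, 0 < ∏ j ∈ range (n+1), ‖s + a + j‖ := fun n =>
    Finset.prod_pos fun j _ => norm_pos_iff.mpr (hnea j)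
  -- bound on GammaSeq quotients
  have hGS : ∀ n : ℕ, 1 ≤ n → ‖Complex.GammaSeq (s + a) n‖ ≤
      Real.exp 5 * (1 + ‖s‖)^a * ‖Complex.GammaSeq s n‖ := by
    intro n hn
    have hn0 : (0:ℝ) < n := by exact_mod_cast hn
    rw [Complex.GammaSeq, Complex.GammaSeq]
    rw [norm_div, norm_div, norm_mul, norm_mul]
    rw [Complex.norm_prod, Complex.norm_prod]
    have hcp : ∀ t : ℂ, ‖(n:ℂ) ^ t‖ = (n:ℝ) ^ t.re := by
      intro t
      rw [show ((n:ℕ):ℂ) = (((n:ℝ)):ℂ) by push_cast; rfl]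
      exact Complex.norm_cpow_eq_rpow_re_of_pos hn0 t
    rw [hcp, hcp]
    have hre_add : (s + (a:ℂ)).re = s.re + a := by simp
    rw [hre_add, Real.rpow_add hn0, Complex.norm_natCast]
    rw [← mul_div_assoc, div_le_div_iff₀ (hPa n) (hP0 n)]
    have key := key_norm a ha ha1 s hs hre n
    calc (n:ℝ) ^ s.re * (n:ℝ) ^ a * (n.factorial : ℝ) * ∏ j ∈ range (n+1), ‖s + j‖
        = ((n:ℝ) ^ s.re * (n.factorial : ℝ)) * ((n:ℝ)^a * ∏ j ∈ range (n+1), ‖s + j‖) := by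
          ring
      _ ≤ ((n:ℝ) ^ s.re * (n.factorial : ℝ)) *
            (Real.exp 5 * (1 + ‖s‖)^a * ∏ j ∈ range (n+1), ‖s + a + j‖) := by
          apply mul_le_mul_of_nonneg_left key (by positivity)
      _ = Real.exp 5 * (1 + ‖s‖)^a * ((n:ℝ) ^ s.re * (n.factorial : ℝ)) *
            ∏ j ∈ range (n+1), ‖s + a + j‖ := by ring
  -- pass to the limit
  have h1 : Tendsto (fun n => ‖Complex.GammaSeq (s + a) n‖) atTop
      (nhds (‖Complex.Gamma (s + a)‖)) :=
    (continuous_norm.tendsto _).comp (Complex.GammaSeq_tendsto_Gamma (s + a))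
  have h2 : Tendsto (fun n => Real.exp 5 * (1 + ‖s‖)^a *
      ‖Complex.GammaSeq s n‖) atTop
      (nhds (Real.exp 5 * (1 + ‖s‖)^a * ‖Complex.Gamma s‖)) :=
    ((continuous_norm.tendsto _).comp (Complex.GammaSeq_tendsto_Gamma s)).const_mul _
  exact le_of_tendsto_of_tendsto h1 h2 (eventually_atTop.mpr ⟨1, hGS⟩)

private lemma gamma_ratio_aux : ∀ k : ℕ, ∀ a : ℝ, 0 < a → a ≤ k + 1 →
    ∃ C : ℝ, 0 < C ∧ ∀ s : ℂ, s ≠ 0 → 0 ≤ s.re →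
      ‖Complex.Gamma (s + a)‖ ≤
        C * (1 + ‖s‖)^a * ‖Complex.Gamma s‖ := by
  intro k
  induction k with
  | zero =>
    intro a ha ha1
    refine ⟨Real.exp 5, Real.exp_pos 5, fun s hs hre => ?_⟩
    exact gamma_ratio_small a ha (by simpa using ha1) s hs hre
  | succ k ih =>
    intro a ha ha1
    by_cases hle : a ≤ k + 1
    · exact ih a ha hle
    push_neg at hle
    have hk1 : (1:ℝ) ≤ k + 1 := by have := Nat.cast_nonneg (α:=ℝ) k; linarith
    have ha1' : 0 < a - 1 := by linarith
    have ha2' : a - 1 ≤ k + 1 := by push_cast at ha1 ⊢; linarith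
    obtain ⟨C, hC, hbound⟩ := ih (a - 1) ha1' ha2'
    refine ⟨C * (1 + a), by positivity, fun s hs hre => ?_⟩
    have hsre : 0 < (s + ((a - 1 : ℝ):ℂ)).re := by
      simp only [Complex.add_re, Complex.ofReal_re]
      linarith
    have hsne : s + ((a - 1 : ℝ):ℂ) ≠ 0 := fun h => by
      rw [h] at hsre; simp at hsre
    have hrec : Complex.Gamma (s + a) = (s + ((a-1:ℝ):ℂ)) * Complex.Gamma (s + ((a-1:ℝ):ℂ)) := by
      rw [← Complex.Gamma_add_one _ hsne]
      congr 1
      push_cast; ring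
    rw [hrec, norm_mul]
    have habs : ‖s + ((a-1:ℝ):ℂ)‖ ≤ (1 + a) * (1 + ‖s‖) := by
      calc ‖s + ((a-1:ℝ):ℂ)‖ ≤ ‖s‖ + ‖((a-1:ℝ):ℂ)‖ :=
            norm_add_le _ _
        _ = ‖s‖ + |a - 1| := by rw [Complex.norm_real, Real.norm_eq_abs]
        _ = ‖s‖ + (a - 1) := by rw [abs_of_pos ha1']
        _ ≤ (1 + a) * (1 + ‖s‖) := by nlinarith [norm_nonneg s]
    have hpow : (1 + ‖s‖)^(a-1) * (1 + ‖s‖) = (1 + ‖s‖)^a := by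
      rw [← Real.rpow_add_one (by positivity : (1:ℝ) + ‖s‖ ≠ 0)]
      ring_nf
    calc ‖s + ((a-1:ℝ):ℂ)‖ * ‖Complex.Gamma (s + ((a-1:ℝ):ℂ))‖
        ≤ ((1 + a) * (1 + ‖s‖)) *
            (C * (1 + ‖s‖)^(a-1) * ‖Complex.Gamma s‖) := by
          apply mul_le_mul habs (hbound s hs hre) (norm_nonneg _) (by positivity)
      _ = C * (1 + a) * ((1 + ‖s‖)^(a-1) * (1 + ‖s‖)) *
            ‖Complex.Gamma s‖ := by ring
      _ = C * (1 + a) * (1 + ‖s‖)^a * ‖Complex.Gamma s‖ := by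
          rw [hpow]

private lemma gamma_ratio_div (a : ℝ) (ha : 0 < a) :
    ∃ C : ℝ, 0 < C ∧ ∀ s : ℂ, 0 ≤ s.re →
      ‖Complex.Gamma (s + a) / Complex.Gamma s‖ ≤ C * (1 + ‖s‖)^a := by
  obtain ⟨C, hC, hbound⟩ := gamma_ratio_aux ⌈a⌉₊ a ha
    (by push_cast; linarith [Nat.le_ceil a])
  refine ⟨C, hC, fun s hre => ?_⟩
  by_cases hs : s = 0
  · rw [hs, Complex.Gamma_zero, div_zero, norm_zero]
    positivity
  have hΓ : Complex.Gamma s ≠ 0 := by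
    apply Complex.Gamma_ne_zero
    intro m hm
    rcases Nat.eq_zero_or_pos m with rfl | hmpos
    · simp at hm; exact hs hm
    · have : s.re = -(m:ℝ) := by rw [hm]; simp
      have h2 : (0:ℝ) < m := by exact_mod_cast hmpos
      linarith
  rw [norm_div, div_le_iff₀ (norm_pos_iff.mpr hΓ)]
  exact hbound s hs hre

private lemma Gamma_ne_zero'' (s : ℂ) (hs : s ≠ 0) (hre : 0 ≤ s.re) : Complex.Gamma s ≠ 0 := by
  apply Complex.Gamma_ne_zero
  intro m hm
  rcases Nat.eq_zero_or_pos m with rfl | hmpos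
  · simp at hm; exact hs hm
  · have h1 : s.re = -(m:ℝ) := by rw [hm]; simp
    have h2 : (0:ℝ) < m := by exact_mod_cast hmpos
    linarith

private lemma jacobi_eq (α β : ℝ) (hα : 0 < α + 1) (z s : ℂ) (hs : s ≠ 0) (hre : 0 ≤ s.re)
    (hIz : Complex.I * z = -(2*s)) :
    jacobiCInv α β z =
      ((2:ℂ)^((1:ℂ) - ((α:ℂ) + β + 1)) * ((Real.sqrt Real.pi : ℝ) : ℂ) /
          Complex.Gamma ((α:ℂ) + 1)) *
        (Complex.Gamma (s + (((α+β+1)/2 : ℝ) : ℂ)) / Complex.Gamma s) *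
        (Complex.Gamma ((s + 1/2) + (((α-β)/2 : ℝ) : ℂ)) / Complex.Gamma (s + 1/2)) := by
  have hΓs : Complex.Gamma s ≠ 0 := Gamma_ne_zero'' s hs hre
  have hΓs2 : Complex.Gamma (s + 1/2) ≠ 0 := by
    apply Complex.Gamma_ne_zero_of_re_pos
    simp only [Complex.add_re]
    norm_num
    linarith
  have hΓα : Complex.Gamma ((α:ℂ) + 1) ≠ 0 := by
    apply Complex.Gamma_ne_zero_of_re_pos
    simp only [Complex.add_re, Complex.ofReal_re, Complex.one_re]
    exact_mod_cast hα
  have hpow2 : (2:ℂ)^((1:ℂ)-2*s) ≠ 0 := by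
    simp [Complex.cpow_eq_zero_iff]
  have hpi : ((Real.sqrt Real.pi : ℝ) : ℂ) ≠ 0 := by
    simp [Real.sqrt_eq_zero', Real.pi_pos.le]
  have harg1 : ((α:ℂ) + β + 1 - Complex.I*z)/2 = s + (((α+β+1)/2 : ℝ) : ℂ) := by
    rw [hIz]; push_cast; ring
  have harg2 : ((α:ℂ) + β + 1 - Complex.I*z)/2 - β = (s + 1/2) + (((α-β)/2 : ℝ) : ℂ) := by
    rw [hIz]; push_cast; ring
  have harg3 : -(Complex.I*z) = 2*s := by rw [hIz]; ring
  have hGamma2s : Complex.Gamma (2*s) =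
      Complex.Gamma s * Complex.Gamma (s + 1/2) / ((2:ℂ)^((1:ℂ)-2*s) * ((Real.sqrt Real.pi : ℝ) : ℂ)) := by
    rw [eq_div_iff (mul_ne_zero hpow2 hpi)]
    linear_combination (Complex.Gamma_mul_Gamma_add_half s).symm
  have hpow : (2:ℂ)^(-((α:ℂ) + β + 1) - Complex.I*z) * (2:ℂ)^((1:ℂ)-2*s) =
      (2:ℂ)^((1:ℂ) - ((α:ℂ) + β + 1)) := by
    rw [← Complex.cpow_add _ _ two_ne_zero]
    congr 1
    rw [hIz]; ring
  rw [jacobiCInv, harg2, harg1, harg3, hGamma2s, ← hpow]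
  field_simp

theorem jacobiCInv_bound (α β : ℝ) (hβ : -(1/2 : ℝ) < β) (hαβ : β < α) :
    ∃ C : ℝ, 0 < C ∧ ∀ z : ℂ, 0 ≤ z.im →
      ‖jacobiCInv α β z‖ ≤ C * (1 + ‖z‖) ^ (α + 1/2 : ℝ) := by
  have hρ : 0 < (α + β + 1)/2 := by linarith
  have hab : 0 < (α - β)/2 := by linarith
  have hα1 : 0 < α + 1 := by linarith
  obtain ⟨C₁, hC₁, h₁⟩ := gamma_ratio_div ((α+β+1)/2) hρ
  obtain ⟨C₂, hC₂, h₂⟩ := gamma_ratio_div ((α-β)/2) hab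
  have hΓα : Complex.Gamma ((α:ℂ) + 1) ≠ 0 := by
    apply Complex.Gamma_ne_zero_of_re_pos
    simp only [Complex.add_re, Complex.ofReal_re, Complex.one_re]
    exact_mod_cast hα1
  have hpownz : (2:ℂ)^((1:ℂ) - ((α:ℂ) + β + 1)) ≠ 0 := by
    simp [Complex.cpow_eq_zero_iff]
  have hpi : ((Real.sqrt Real.pi : ℝ) : ℂ) ≠ 0 := by
    simp [Real.sqrt_eq_zero', Real.pi_pos.le]
  set K : ℝ := ‖(2:ℂ)^((1:ℂ) - ((α:ℂ) + β + 1)) * ((Real.sqrt Real.pi : ℝ) : ℂ) /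
      Complex.Gamma ((α:ℂ) + 1)‖ with hKdef
  have hK : 0 < K := by
    rw [hKdef]
    exact norm_pos_iff.mpr (div_ne_zero (mul_ne_zero hpownz hpi) hΓα)
  refine ⟨K * C₁ * C₂ * (3/2 : ℝ)^((α-β)/2 : ℝ), by positivity, fun z hz => ?_⟩
  by_cases hz0 : z = 0
  · subst hz0
    rw [show jacobiCInv α β 0 = 0 by
      rw [jacobiCInv]; simp [Complex.Gamma_zero]]
    rw [norm_zero]
    positivity
  -- the point s
  have hIzne : Complex.I * z ≠ 0 := mul_ne_zero Complex.I_ne_zero hz0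
  have hs : -(Complex.I * z)/2 ≠ 0 := div_ne_zero (neg_ne_zero.mpr hIzne) two_ne_zero
  have hre : 0 ≤ (-(Complex.I * z)/2).re := by
    have : (-(Complex.I * z)/2).re = z.im / 2 := by
      simp [Complex.div_re, Complex.mul_re, Complex.I_re, Complex.I_im]
    rw [this]
    linarith
  have habs_s : ‖-(Complex.I * z)/2‖ = ‖z‖ / 2 := by
    rw [norm_div, norm_neg, norm_mul, Complex.norm_I, one_mul]
    norm_num
  have heq := jacobi_eq α β hα1 z (-(Complex.I * z)/2) hs hre (by ring)
  rw [heq, norm_mul, norm_mul, ← hKdef]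
  have hre2 : 0 ≤ (-(Complex.I * z)/2 + 1/2).re := by
    simp only [Complex.add_re]
    have : ((1:ℂ)/2).re = 1/2 := by norm_num
    rw [this]
    linarith
  have hq₁ := h₁ (-(Complex.I * z)/2) hre
  have hq₂ := h₂ (-(Complex.I * z)/2 + 1/2) hre2
  have habs0 : (0:ℝ) ≤ ‖z‖ := norm_nonneg _
  -- monotonicity in the base
  have hb₁ : (1 + ‖-(Complex.I * z)/2‖)^((α+β+1)/2 : ℝ) ≤
      (1 + ‖z‖)^((α+β+1)/2 : ℝ) := by
    apply Real.rpow_le_rpow (by positivity) _ hρ.le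
    rw [habs_s]; linarith
  have hb₂ : (1 + ‖-(Complex.I * z)/2 + 1/2‖)^((α-β)/2 : ℝ) ≤
      ((3/2) * (1 + ‖z‖))^((α-β)/2 : ℝ) := by
    apply Real.rpow_le_rpow (by positivity) _ hab.le
    have h3 : ‖-(Complex.I * z)/2 + 1/2‖ ≤ ‖z‖ / 2 + 1/2 := by
      calc ‖-(Complex.I * z)/2 + 1/2‖ ≤
          ‖-(Complex.I * z)/2‖ + ‖(1/2 : ℂ)‖ := norm_add_le _ _
        _ = ‖z‖ / 2 + 1/2 := by rw [habs_s]; norm_num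
    nlinarith
  have hsplit : ((3/2 : ℝ) * (1 + ‖z‖))^((α-β)/2 : ℝ) =
      (3/2 : ℝ)^((α-β)/2 : ℝ) * (1 + ‖z‖)^((α-β)/2 : ℝ) :=
    Real.mul_rpow (by norm_num) (by positivity)
  have hcombine : (1 + ‖z‖)^((α+β+1)/2 : ℝ) * (1 + ‖z‖)^((α-β)/2 : ℝ) =
      (1 + ‖z‖)^(α + 1/2 : ℝ) := by
    rw [← Real.rpow_add (by positivity)]
    congr 1
    ring
  calc K * ‖Complex.Gamma (-(Complex.I * z)/2 + (((α+β+1)/2 : ℝ):ℂ)) /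
          Complex.Gamma (-(Complex.I * z)/2)‖ *
        ‖Complex.Gamma (-(Complex.I * z)/2 + 1/2 + (((α-β)/2 : ℝ):ℂ)) /
          Complex.Gamma (-(Complex.I * z)/2 + 1/2)‖
      ≤ K * (C₁ * (1 + ‖-(Complex.I * z)/2‖)^((α+β+1)/2 : ℝ)) *
        (C₂ * (1 + ‖-(Complex.I * z)/2 + 1/2‖)^((α-β)/2 : ℝ)) := by
        apply mul_le_mul (mul_le_mul_of_nonneg_left hq₁ hK.le) hq₂ (norm_nonneg _)
        positivity
    _ ≤ K * (C₁ * (1 + ‖z‖)^((α+β+1)/2 : ℝ)) *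
        (C₂ * ((3/2) * (1 + ‖z‖))^((α-β)/2 : ℝ)) := by
        apply mul_le_mul
        · apply mul_le_mul_of_nonneg_left (mul_le_mul_of_nonneg_left hb₁ hC₁.le) hK.le
        · exact mul_le_mul_of_nonneg_left hb₂ hC₂.le
        · positivity
        · positivity
    _ = K * C₁ * C₂ * (3/2 : ℝ)^((α-β)/2 : ℝ) *
        ((1 + ‖z‖)^((α+β+1)/2 : ℝ) * (1 + ‖z‖)^((α-β)/2 : ℝ)) := by
        rw [hsplit]; ring
    _ = K * C₁ * C₂ * (3/2 : ℝ)^((α-β)/2 : ℝ) * (1 + ‖z‖)^(α + 1/2 : ℝ) := by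
        rw [hcombine]
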